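/- In the setting of a finite connected groupoid G acting via a lifted, τ(x)-global, γ-unital partial action β on A = ⊕_{y∈G₀} B_y, the trace map t_β : A → A^β is surjective onto A^β if and only if the trace map t_{β_{(x)}} : B_x → B_x^{β_{(x)}} of the restricted partial group action of G(x) on B_x is surjective onto B_x^{β_{(x)}}. -/
import Mathlib


open CategoryTheory

universe u v w

/-- `S` is a (two-sided) ideal of the subset `R` of the ring `A`. -/
def IsIdealIn {A : Type v} [Ring A] (S R : Set A) : Prop :=
  S ⊆ R ∧ (0 : A) ∈ S ∧ (∀ a ∈ S, ∀ b ∈ S, a + b ∈ S) ∧ (∀ a ∈ S, -a ∈ S) ∧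
    ∀ r ∈ R, ∀ s ∈ S, r * s ∈ S ∧ s * r ∈ S

/-- A partial action of a groupoid `G` on a ring `A`: for each morphism `g : a ⟶ b`,
an ideal `D g` of `D (𝟙 b)` (which is an ideal of `A`), and a ring isomorphism
`f g : D (inv g) → D g` (encoded as a total function of `A` which is a bijection of
the relevant subsets), such that `f (𝟙 y)` is the identity of `D (𝟙 y)` and
`f (h ≫ g)` extends `f g ∘ f h`. -/
structure PartialGroupoidAction (G : Type u) (A : Type v) [Groupoid G] [Ring A] where
  D : ∀ {a b : G}, (a ⟶ b) → Set A
  f : ∀ {a b : G}, (a ⟶ b) → A → A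
  ideal_obj : ∀ y : G, IsIdealIn (D (𝟙 y)) Set.univ
  ideal_mor : ∀ {a b : G} (g : a ⟶ b), IsIdealIn (D g) (D (𝟙 b))
  bij : ∀ {a b : G} (g : a ⟶ b), Set.BijOn (f g) (D (Groupoid.inv g)) (D g)
  map_add : ∀ {a b : G} (g : a ⟶ b), ∀ u ∈ D (Groupoid.inv g), ∀ v ∈ D (Groupoid.inv g),
    f g (u + v) = f g u + f g v
  map_mul : ∀ {a b : G} (g : a ⟶ b), ∀ u ∈ D (Groupoid.inv g), ∀ v ∈ D (Groupoid.inv g),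
    f g (u * v) = f g u * f g v
  id_act : ∀ y : G, ∀ u ∈ D (𝟙 y), f (𝟙 y) u = u
  comp : ∀ {a b c : G} (h : a ⟶ b) (g : b ⟶ c), ∀ u ∈ D (Groupoid.inv h),
    f h u ∈ D (Groupoid.inv g) →
      u ∈ D (Groupoid.inv (h ≫ g)) ∧ f (h ≫ g) u = f g (f h u)

/-- The setting of Sections 6–8 of the paper: a finite connected groupoid `G` with a
fixed object `x` and transversal `τ`, and a partial action `act` of `G` on `A` which is
unital (`D g = A·(e g)` for central idempotents `e g`), `τ(x)`-global, lifted from a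
datum (i.e. `f g = γ_{τ_{t g}} ∘ γ_{g_x} ∘ γ_{τ_{s g}}⁻¹`), and `A = ⊕_{y} D (𝟙 y)`. -/
structure LiftedSetting (G : Type u) (A : Type v) [Groupoid G] [Ring A] [Fintype G]
    [∀ a b : G, Fintype (a ⟶ b)] (x : G) (τ : ∀ y : G, x ⟶ y) where
  act : PartialGroupoidAction G A
  e : ∀ {a b : G}, (a ⟶ b) → A
  e_central : ∀ {a b : G} (g : a ⟶ b) (r : A), e g * r = r * e g
  e_idem : ∀ {a b : G} (g : a ⟶ b), e g * e g = e g
  D_eq : ∀ {a b : G} (g : a ⟶ b), act.D g = {u : A | u * e g = u}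
  tau_id : τ x = 𝟙 x
  tau_global_inv : ∀ y : G, act.D (Groupoid.inv (τ y)) = act.D (𝟙 x)
  tau_global : ∀ y : G, act.D (τ y) = act.D (𝟙 y)
  lifted : ∀ {a b : G} (g : a ⟶ b), ∀ u ∈ act.D (Groupoid.inv g),
    act.f g u =
      act.f (τ b) (act.f (τ a ≫ g ≫ Groupoid.inv (τ b)) (act.f (Groupoid.inv (τ a)) u))
  orth : ∀ y z : G, y ≠ z → e (𝟙 y) * e (𝟙 z) = 0
  sum_id_one : (∑ y : G, e (𝟙 y)) = 1

set_option linter.unusedSectionVars false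

namespace LiftedSetting

section Helpers

variable {G : Type u} [Groupoid G]

lemma ginv_id (a : G) : Groupoid.inv (𝟙 a) = 𝟙 a := by
  simp [Groupoid.inv_eq_inv]

lemma ginv_ginv {a b : G} (g : a ⟶ b) : Groupoid.inv (Groupoid.inv g) = g := by
  simp [Groupoid.inv_eq_inv]

lemma ginv_comp {a b c : G} (g : a ⟶ b) (h : b ⟶ c) :
    Groupoid.inv (g ≫ h) = Groupoid.inv h ≫ Groupoid.inv g := by
  simp [Groupoid.inv_eq_inv]

variable {G : Type u} {A : Type v} [Groupoid G] [Ring A] [Fintype G]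
    [∀ a b : G, Fintype (a ⟶ b)] {x : G} {τ : ∀ y : G, x ⟶ y}
    (S : LiftedSetting G A x τ)

lemma mem_D_iff {a b : G} (g : a ⟶ b) {u : A} : u ∈ S.act.D g ↔ u * S.e g = u := by
  rw [S.D_eq]; rfl

lemma e_mem {a b : G} (g : a ⟶ b) : S.e g ∈ S.act.D g := (S.mem_D_iff g).2 (S.e_idem g)

lemma D_sub {a b : G} (g : a ⟶ b) : S.act.D g ⊆ S.act.D (𝟙 b) := (S.act.ideal_mor g).1

lemma e_mul_id {a b : G} (g : a ⟶ b) : S.e g * S.e (𝟙 b) = S.e g :=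
  (S.mem_D_iff (𝟙 b)).1 (S.D_sub g (S.e_mem g))

lemma e_eq_of_D_eq {a b a' b' : G} (g : a ⟶ b) (g' : a' ⟶ b')
    (h : S.act.D g = S.act.D g') : S.e g = S.e g' := by
  have h1 : S.e g * S.e g' = S.e g := (S.mem_D_iff g').1 (h ▸ S.e_mem g)
  have h2 : S.e g' * S.e g = S.e g' := (S.mem_D_iff g).1 (h.symm ▸ S.e_mem g')
  rw [← h1, S.e_central, h2]

lemma e_inv_tau (y : G) : S.e (Groupoid.inv (τ y)) = S.e (𝟙 x) :=
  S.e_eq_of_D_eq _ _ (S.tau_global_inv y)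

lemma e_tau (y : G) : S.e (τ y) = S.e (𝟙 y) :=
  S.e_eq_of_D_eq _ _ (S.tau_global y)

lemma zero_mem {a b : G} (g : a ⟶ b) : (0 : A) ∈ S.act.D g :=
  (S.mem_D_iff g).2 (zero_mul _)

lemma mul_e_mem {a b : G} (g : a ⟶ b) (r : A) : r * S.e g ∈ S.act.D g := by
  rw [S.mem_D_iff, mul_assoc, S.e_idem]

lemma sum_mem {ι : Type w} (s : Finset ι) (t : ι → A) {a b : G} (g : a ⟶ b)
    (h : ∀ i ∈ s, t i ∈ S.act.D g) : (∑ i ∈ s, t i) ∈ S.act.D g := by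
  rw [S.mem_D_iff, Finset.sum_mul]
  exact Finset.sum_congr rfl fun i hi => (S.mem_D_iff g).1 (h i hi)

lemma f_mem {a b : G} (g : a ⟶ b) {u : A} (h : u ∈ S.act.D (Groupoid.inv g)) :
    S.act.f g u ∈ S.act.D g := (S.act.bij g).mapsTo h

lemma f_zero {a b : G} (g : a ⟶ b) : S.act.f g 0 = 0 := by
  have h := S.act.map_add g 0 (S.zero_mem _) 0 (S.zero_mem _)
  rw [add_zero] at h
  exact (add_eq_left.mp h.symm)

lemma f_sum {ι : Type w} (s : Finset ι) (t : ι → A) {a b : G} (g : a ⟶ b)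
    (h : ∀ i ∈ s, t i ∈ S.act.D (Groupoid.inv g)) :
    S.act.f g (∑ i ∈ s, t i) = ∑ i ∈ s, S.act.f g (t i) := by
  classical
  induction s using Finset.induction_on with
  | empty => simp [S.f_zero g]
  | @insert i s hi ih =>
    rw [Finset.sum_insert hi, Finset.sum_insert hi,
      S.act.map_add g _ (h i (Finset.mem_insert_self _ _)) _
        (S.sum_mem _ _ _ fun j hj => h j (Finset.mem_insert_of_mem hj)),
      ih fun j hj => h j (Finset.mem_insert_of_mem hj)]

lemma f_inv_f {a b : G} (p : a ⟶ b) {u : A} (hu : u ∈ S.act.D (Groupoid.inv p)) :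
    S.act.f (Groupoid.inv p) (S.act.f p u) = u := by
  have h1 : S.act.f p u ∈ S.act.D (Groupoid.inv (Groupoid.inv p)) := by
    rw [ginv_ginv]; exact S.f_mem p hu
  have h2 := S.act.comp p (Groupoid.inv p) u hu h1
  rw [← h2.2, Groupoid.comp_inv]
  exact S.act.id_act a u (S.D_sub (Groupoid.inv p) hu)

lemma f_f_inv {a b : G} (p : a ⟶ b) {u : A} (hu : u ∈ S.act.D p) :
    S.act.f p (S.act.f (Groupoid.inv p) u) = u := by
  have := S.f_inv_f (Groupoid.inv p) (u := u) (by rw [ginv_ginv]; exact hu)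
  rwa [ginv_ginv] at this

end Helpers

end LiftedSetting
namespace LiftedSetting

section Key

set_option linter.unusedSectionVars false

variable {G : Type u} {A : Type v} [Groupoid G] [Ring A] [Fintype G]
    [∀ a b : G, Fintype (a ⟶ b)] {x : G} {τ : ∀ y : G, x ⟶ y}
    (S : LiftedSetting G A x τ)

lemma mapsTo_fwd {a b : G} (g : a ⟶ b) {w : A} (hw : w ∈ S.act.D (Groupoid.inv g)) :
    S.act.f (Groupoid.inv (τ a)) w ∈
      S.act.D (Groupoid.inv (τ a ≫ g ≫ Groupoid.inv (τ b))) := by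
  have hwa : w ∈ S.act.D (𝟙 a) := S.D_sub _ hw
  have hwdom : w ∈ S.act.D (Groupoid.inv (Groupoid.inv (τ a))) := by
    rw [ginv_ginv, S.tau_global]; exact hwa
  have hu1 : S.act.f (Groupoid.inv (τ a)) w ∈ S.act.D (Groupoid.inv (τ a)) :=
    S.f_mem _ hwdom
  have hfw : S.act.f (τ a) (S.act.f (Groupoid.inv (τ a)) w) = w :=
    S.f_f_inv (τ a) (by rw [S.tau_global]; exact hwa)
  have step1 := S.act.comp (τ a) g _ hu1 (by rw [hfw]; exact hw)
  have hmem2 : S.act.f (τ a ≫ g) (S.act.f (Groupoid.inv (τ a)) w) ∈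
      S.act.D (Groupoid.inv (Groupoid.inv (τ b))) := by
    rw [ginv_ginv, S.tau_global]
    exact S.D_sub _ (S.f_mem _ step1.1)
  have step2 := S.act.comp (τ a ≫ g) (Groupoid.inv (τ b)) _ step1.1 hmem2
  rw [Category.assoc] at step2
  exact step2.1

lemma mapsTo_bwd {a b : G} (g : a ⟶ b) {z : A}
    (hz : z ∈ S.act.D (Groupoid.inv (τ a ≫ g ≫ Groupoid.inv (τ b)))) :
    S.act.f (τ a) z ∈ S.act.D (Groupoid.inv g) := by
  have hzx : z ∈ S.act.D (𝟙 x) := S.D_sub _ hz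
  have hm1 : S.act.f (τ a ≫ g ≫ Groupoid.inv (τ b)) z ∈
      S.act.D (Groupoid.inv (τ b)) := by
    rw [S.tau_global_inv]; exact S.D_sub _ (S.f_mem _ hz)
  have step1 := S.act.comp (τ a ≫ g ≫ Groupoid.inv (τ b)) (τ b) z hz hm1
  have hcomp : (τ a ≫ g ≫ Groupoid.inv (τ b)) ≫ τ b = τ a ≫ g := by
    simp [Groupoid.inv_eq_inv]
  rw [hcomp] at step1
  have hzdom : z ∈ S.act.D (Groupoid.inv (τ a)) := by rw [S.tau_global_inv]; exact hzx
  have hw : S.act.f (τ a) z ∈ S.act.D (Groupoid.inv (Groupoid.inv (τ a))) := by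
    rw [ginv_ginv]; exact S.f_mem _ hzdom
  have hfiw : S.act.f (Groupoid.inv (τ a)) (S.act.f (τ a) z) = z := S.f_inv_f (τ a) hzdom
  have step2 := S.act.comp (Groupoid.inv (τ a)) (τ a ≫ g) _ hw (by rw [hfiw]; exact step1.1)
  have hcomp2 : Groupoid.inv (τ a) ≫ τ a ≫ g = g := by simp [Groupoid.inv_eq_inv]
  rw [hcomp2] at step2
  exact step2.1

lemma f_e_inv {a b : G} (g : a ⟶ b) :
    S.act.f (Groupoid.inv (τ a)) (S.e (Groupoid.inv g)) =
      S.e (Groupoid.inv (τ a ≫ g ≫ Groupoid.inv (τ b))) := by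
  set h := τ a ≫ g ≫ Groupoid.inv (τ b) with hh
  set t := S.act.f (Groupoid.inv (τ a)) (S.e (Groupoid.inv g)) with ht
  have h1 : t ∈ S.act.D (Groupoid.inv h) := S.mapsTo_fwd g (S.e_mem _)
  have h2 : t * S.e (Groupoid.inv h) = t := (S.mem_D_iff _).1 h1
  set s := S.act.f (τ a) (S.e (Groupoid.inv h)) with hs
  have h3 : s ∈ S.act.D (Groupoid.inv g) := S.mapsTo_bwd g (S.e_mem _)
  have h4 : s * S.e (Groupoid.inv g) = s := (S.mem_D_iff _).1 h3
  have hsmem : s ∈ S.act.D (Groupoid.inv (Groupoid.inv (τ a))) := by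
    rw [ginv_ginv]
    exact S.f_mem _ (by rw [S.tau_global_inv]; exact S.D_sub _ (S.e_mem (Groupoid.inv h)))
  have hegmem : S.e (Groupoid.inv g) ∈ S.act.D (Groupoid.inv (Groupoid.inv (τ a))) := by
    rw [ginv_ginv, S.tau_global]
    exact S.D_sub _ (S.e_mem (Groupoid.inv g))
  have h5 : S.act.f (Groupoid.inv (τ a)) (s * S.e (Groupoid.inv g)) =
      S.act.f (Groupoid.inv (τ a)) s * t := S.act.map_mul _ s hsmem _ hegmem
  have h6 : S.act.f (Groupoid.inv (τ a)) s = S.e (Groupoid.inv h) :=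
    S.f_inv_f (τ a) (by rw [S.tau_global_inv]; exact S.D_sub _ (S.e_mem _))
  have h7 : S.e (Groupoid.inv h) = S.e (Groupoid.inv h) * t := by
    calc S.e (Groupoid.inv h) = S.act.f (Groupoid.inv (τ a)) s := h6.symm
      _ = S.act.f (Groupoid.inv (τ a)) (s * S.e (Groupoid.inv g)) := by rw [h4]
      _ = S.act.f (Groupoid.inv (τ a)) s * t := h5
      _ = S.e (Groupoid.inv h) * t := by rw [h6]
  calc t = t * S.e (Groupoid.inv h) := h2.symm
    _ = S.e (Groupoid.inv h) * t := (S.e_central _ _).symm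
    _ = S.e (Groupoid.inv h) := by rw [← h7]
  -- fix below if needed

lemma f_e {a b : G} (g : a ⟶ b) :
    S.act.f (τ b) (S.e (τ a ≫ g ≫ Groupoid.inv (τ b))) = S.e g := by
  have h := S.f_e_inv (Groupoid.inv g)
  rw [ginv_ginv] at h
  have hmor : Groupoid.inv (τ b ≫ Groupoid.inv g ≫ Groupoid.inv (τ a)) =
      τ a ≫ g ≫ Groupoid.inv (τ b) := by
    simp [Groupoid.inv_eq_inv]
  rw [hmor] at h
  rw [← h]
  exact S.f_f_inv (τ b) (by rw [S.tau_global]; exact S.D_sub _ (S.e_mem g))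

end Key

end LiftedSetting

/-- Bijection between hom-sets through the transversal. -/
def homEquiv {G : Type u} [Groupoid G] {x : G} (τ : ∀ y : G, x ⟶ y) (a b : G) :
    (a ⟶ b) ≃ (x ⟶ x) where
  toFun g := τ a ≫ g ≫ Groupoid.inv (τ b)
  invFun h := Groupoid.inv (τ a) ≫ h ≫ τ b
  left_inv g := by simp [Groupoid.inv_eq_inv]
  right_inv h := by simp [Groupoid.inv_eq_inv]
lemma sum_sigma_eq {G : Type u} [Groupoid G] [Fintype G] [∀ a b : G, Fintype (a ⟶ b)]
    {M : Type w} [AddCommMonoid M] (F : (Σ a : G, Σ b : G, a ⟶ b) → M) :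
    ∑ p : Σ a : G, Σ b : G, a ⟶ b, F p = ∑ a : G, ∑ b : G, ∑ g : a ⟶ b, F ⟨a, b, g⟩ := by
  rw [← Finset.univ_sigma_univ, Finset.sum_sigma]
  refine Finset.sum_congr rfl fun a _ => ?_
  rw [← Finset.univ_sigma_univ, Finset.sum_sigma]
open LiftedSetting

/-- The trace map `t_β : A → A^β` of a lifted, `τ(x)`-global, `γ`-unital partial action
of a finite connected groupoid is surjective onto the invariants `A^β` if and only if
the trace map `t_{β_{(x)}} : B_x → B_x^{β_{(x)}}` of the restricted partial action of
the isotropy group `G(x)` on `B_x` is surjective onto `B_x^{β_{(x)}}`. -/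
theorem stmt15 {G : Type u} {A : Type v} [Groupoid G] [Ring A] [Fintype G]
    [∀ a b : G, Fintype (a ⟶ b)] (x : G) (τ : ∀ y : G, x ⟶ y)
    (S : LiftedSetting G A x τ) :
    Set.SurjOn
        (fun u : A => ∑ p : Σ a : G, Σ b : G, a ⟶ b,
          S.act.f p.2.2 (u * S.e (Groupoid.inv p.2.2)))
        Set.univ
        {v : A | ∀ (a b : G) (g : a ⟶ b),
          S.act.f g (v * S.e (Groupoid.inv g)) = v * S.e g} ↔
      Set.SurjOn
        (fun u : A => ∑ h : x ⟶ x, S.act.f h (u * S.e (Groupoid.inv h)))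
        (S.act.D (𝟙 x))
        {v : A | v ∈ S.act.D (𝟙 x) ∧
          ∀ h : x ⟶ x, S.act.f h (v * S.e (Groupoid.inv h)) = v * S.e h} := by
  constructor
  · -- global trace surjective → isotropy trace surjective
    intro hglob v hv
    obtain ⟨hvD, hvinv⟩ := hv
    have hvx : v * S.e (𝟙 x) = v := (S.mem_D_iff _).1 hvD
    set vt := ∑ b : G, S.act.f (τ b) v with hvt
    have hfv : ∀ c : G, S.act.f (τ c) v ∈ S.act.D (𝟙 c) := fun c => by
      rw [← S.tau_global]; exact S.f_mem _ (by rw [S.tau_global_inv]; exact hvD)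
    have key : ∀ (c : G) (m : A), m * S.e (𝟙 c) = m → vt * m = S.act.f (τ c) v * m := by
      intro c m hm
      rw [hvt, Finset.sum_mul]
      refine Finset.sum_eq_single c (fun b' _ hne => ?_)
        (fun habs => absurd (Finset.mem_univ c) habs)
      have h1 : S.act.f (τ b') v * S.e (𝟙 b') = S.act.f (τ b') v :=
        (S.mem_D_iff _).1 (hfv b')
      calc S.act.f (τ b') v * m
          = S.act.f (τ b') v * S.e (𝟙 b') * m := by rw [h1]
        _ = S.act.f (τ b') v * (S.e (𝟙 b') * (m * S.e (𝟙 c))) := by rw [mul_assoc, hm]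
        _ = S.act.f (τ b') v * (m * (S.e (𝟙 b') * S.e (𝟙 c))) := by
            rw [← mul_assoc (S.e (𝟙 b')), S.e_central (𝟙 b') m, mul_assoc]
        _ = 0 := by rw [S.orth b' c hne, mul_zero, mul_zero]
    have hvtinv : vt ∈ {v : A | ∀ (a b : G) (g : a ⟶ b),
        S.act.f g (v * S.e (Groupoid.inv g)) = v * S.e g} := by
      intro a b g
      have h1 : vt * S.e (Groupoid.inv g) = S.act.f (τ a) v * S.e (Groupoid.inv g) :=
        key a _ (S.e_mul_id (Groupoid.inv g))
      have hz : S.act.f (τ a) v * S.e (Groupoid.inv g) ∈ S.act.D (Groupoid.inv g) :=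
        S.mul_e_mem _ _
      rw [h1, S.lifted g _ hz]
      have hm1 : S.act.f (τ a) v ∈ S.act.D (Groupoid.inv (Groupoid.inv (τ a))) := by
        rw [ginv_ginv]; exact S.f_mem _ (by rw [S.tau_global_inv]; exact hvD)
      have hm2 : S.e (Groupoid.inv g) ∈ S.act.D (Groupoid.inv (Groupoid.inv (τ a))) := by
        rw [ginv_ginv, S.tau_global]; exact S.D_sub _ (S.e_mem _)
      rw [S.act.map_mul (Groupoid.inv (τ a)) _ hm1 _ hm2,
        S.f_inv_f (τ a) (by rw [S.tau_global_inv]; exact hvD), S.f_e_inv g,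
        hvinv (τ a ≫ g ≫ Groupoid.inv (τ b))]
      have hm3 : v ∈ S.act.D (Groupoid.inv (τ b)) := by rw [S.tau_global_inv]; exact hvD
      have hm4 : S.e (τ a ≫ g ≫ Groupoid.inv (τ b)) ∈ S.act.D (Groupoid.inv (τ b)) := by
        rw [S.tau_global_inv]; exact S.D_sub _ (S.e_mem _)
      rw [S.act.map_mul (τ b) _ hm3 _ hm4, S.f_e g, key b (S.e g) (S.e_mul_id g)]
    obtain ⟨u, -, hu⟩ := hglob hvtinv
    simp only at hu
    set w := ∑ a : G, S.act.f (Groupoid.inv (τ a)) (u * S.e (𝟙 a)) with hwdef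
    have hwD : w ∈ S.act.D (𝟙 x) := by
      rw [hwdef]
      refine S.sum_mem _ _ _ fun a _ => ?_
      rw [← S.tau_global_inv a]
      refine S.f_mem _ ?_
      rw [ginv_ginv, S.tau_global]
      exact S.mul_e_mem _ _
    have hv_eq : vt * S.e (𝟙 x) = v := by
      rw [key x _ (S.e_idem (𝟙 x)), S.tau_id, S.act.id_act x v hvD, hvx]
    refine ⟨w, hwD, ?_⟩
    simp only
    have main : (∑ p : Σ a : G, Σ b : G, a ⟶ b,
          S.act.f p.2.2 (u * S.e (Groupoid.inv p.2.2))) * S.e (𝟙 x)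
        = ∑ h : x ⟶ x, S.act.f h (w * S.e (Groupoid.inv h)) := by
      calc (∑ p : Σ a : G, Σ b : G, a ⟶ b,
              S.act.f p.2.2 (u * S.e (Groupoid.inv p.2.2))) * S.e (𝟙 x)
          = ∑ a : G, ∑ b : G, ∑ g : a ⟶ b,
              S.act.f g (u * S.e (Groupoid.inv g)) * S.e (𝟙 x) := by
            rw [sum_sigma_eq]; simp only [Finset.sum_mul]
        _ = ∑ a : G, ∑ g : a ⟶ x, S.act.f g (u * S.e (Groupoid.inv g)) := by
            refine Finset.sum_congr rfl fun a _ => ?_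
            rw [Finset.sum_eq_single x (fun b _ hb => ?_)
              (fun habs => absurd (Finset.mem_univ x) habs)]
            · refine Finset.sum_congr rfl fun g _ => ?_
              have : S.act.f g (u * S.e (Groupoid.inv g)) ∈ S.act.D (𝟙 x) :=
                S.D_sub g (S.f_mem g (S.mul_e_mem _ _))
              exact (S.mem_D_iff _).1 this
            · refine Finset.sum_eq_zero fun g _ => ?_
              have h1 : S.act.f g (u * S.e (Groupoid.inv g)) * S.e (𝟙 b) =
                  S.act.f g (u * S.e (Groupoid.inv g)) :=
                (S.mem_D_iff _).1 (S.D_sub g (S.f_mem g (S.mul_e_mem _ _)))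
              rw [← h1, mul_assoc, S.orth b x hb, mul_zero]
        _ = ∑ a : G, ∑ g : a ⟶ x,
              S.act.f (τ a ≫ g ≫ Groupoid.inv (τ x))
                (S.act.f (Groupoid.inv (τ a)) (u * S.e (𝟙 a)) *
                  S.e (Groupoid.inv (τ a ≫ g ≫ Groupoid.inv (τ x)))) := by
            refine Finset.sum_congr rfl fun a _ => Finset.sum_congr rfl fun g _ => ?_
            have hmem : u * S.e (Groupoid.inv g) ∈ S.act.D (Groupoid.inv g) := S.mul_e_mem _ _
            rw [S.lifted g _ hmem]
            have hsplit : u * S.e (Groupoid.inv g) =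
                u * S.e (𝟙 a) * S.e (Groupoid.inv g) := by
              rw [mul_assoc, S.e_central (𝟙 a), S.e_mul_id]
            have hm1 : u * S.e (𝟙 a) ∈ S.act.D (Groupoid.inv (Groupoid.inv (τ a))) := by
              rw [ginv_ginv, S.tau_global]; exact S.mul_e_mem _ _
            have hm2 : S.e (Groupoid.inv g) ∈ S.act.D (Groupoid.inv (Groupoid.inv (τ a))) := by
              rw [ginv_ginv, S.tau_global]; exact S.D_sub _ (S.e_mem _)
            rw [hsplit, S.act.map_mul (Groupoid.inv (τ a)) _ hm1 _ hm2, S.f_e_inv g]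
            -- outer f (τ x) is the identity
            rw [S.tau_id]
            exact S.act.id_act x _ (S.D_sub _ (S.f_mem _ (S.mul_e_mem _ _)))
        _ = ∑ a : G, ∑ h : x ⟶ x,
              S.act.f h (S.act.f (Groupoid.inv (τ a)) (u * S.e (𝟙 a)) *
                S.e (Groupoid.inv h)) := by
            refine Finset.sum_congr rfl fun a _ => ?_
            exact Fintype.sum_equiv (homEquiv τ a x) _ _ fun g => rfl
        _ = ∑ h : x ⟶ x, S.act.f h (w * S.e (Groupoid.inv h)) := by
            rw [Finset.sum_comm]
            refine Finset.sum_congr rfl fun h _ => ?_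
            rw [hwdef, Finset.sum_mul, S.f_sum _ _ _ fun a _ => S.mul_e_mem _ _]
    rw [← main, hu]
    exact hv_eq
  · -- isotropy trace surjective → global trace surjective
    intro hiso v hv
    simp only [Set.mem_setOf_eq] at hv
    have hvx_mem : v * S.e (𝟙 x) ∈ S.act.D (𝟙 x) := S.mul_e_mem _ v
    have hvx_inv : ∀ h : x ⟶ x,
        S.act.f h (v * S.e (𝟙 x) * S.e (Groupoid.inv h)) = v * S.e (𝟙 x) * S.e h := by
      intro h
      have h1 : S.e (𝟙 x) * S.e (Groupoid.inv h) = S.e (Groupoid.inv h) := by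
        rw [S.e_central]; exact S.e_mul_id (Groupoid.inv h)
      have h2 : S.e (𝟙 x) * S.e h = S.e h := by
        rw [S.e_central]; exact S.e_mul_id h
      rw [mul_assoc, h1, mul_assoc, h2]
      exact hv x x h
    obtain ⟨w, hwD, hw⟩ := hiso ⟨hvx_mem, hvx_inv⟩
    simp only at hw
    refine ⟨w, Set.mem_univ w, ?_⟩
    simp only
    have hwx : w * S.e (𝟙 x) = w := (S.mem_D_iff _).1 hwD
    rw [sum_sigma_eq]
    rw [Finset.sum_eq_single x (fun a _ ha => ?_) (fun habs => absurd (Finset.mem_univ x) habs)]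
    · -- a = x : main computation
      have hterm : ∀ (b : G) (g : x ⟶ b),
          S.act.f g (w * S.e (Groupoid.inv g)) =
          S.act.f (τ b) (S.act.f (τ x ≫ g ≫ Groupoid.inv (τ b))
            (w * S.e (Groupoid.inv (τ x ≫ g ≫ Groupoid.inv (τ b))))) := by
        intro b g
        have hmemwg : w * S.e (Groupoid.inv g) ∈ S.act.D (Groupoid.inv g) := S.mul_e_mem _ _
        rw [S.lifted g _ hmemwg]
        have hxx : S.act.f (Groupoid.inv (τ x)) (w * S.e (Groupoid.inv g)) =
            w * S.e (Groupoid.inv g) := by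
          rw [S.tau_id, ginv_id]
          exact S.act.id_act x _ (S.D_sub (Groupoid.inv g) hmemwg)
        rw [hxx]
        have he : S.e (Groupoid.inv g) =
            S.e (Groupoid.inv (τ x ≫ g ≫ Groupoid.inv (τ b))) := by
          have h := S.f_e_inv g
          rw [S.tau_id, ginv_id] at h
          rw [S.tau_id, ← h]
          exact (S.act.id_act x _ (S.D_sub (Groupoid.inv g) (S.e_mem (Groupoid.inv g)))).symm
        rw [← he]
      have hinner : ∀ b : G,
          (∑ g : x ⟶ b, S.act.f g (w * S.e (Groupoid.inv g))) = v * S.e (𝟙 b) := by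
        intro b
        calc (∑ g : x ⟶ b, S.act.f g (w * S.e (Groupoid.inv g)))
            = ∑ h : x ⟶ x, S.act.f (τ b) (S.act.f h (w * S.e (Groupoid.inv h))) := by
              refine Fintype.sum_equiv (homEquiv τ x b) _ _ fun g => ?_
              exact hterm b g
          _ = S.act.f (τ b) (∑ h : x ⟶ x, S.act.f h (w * S.e (Groupoid.inv h))) := by
              refine (S.f_sum _ _ _ fun h _ => ?_).symm
              rw [S.tau_global_inv]
              exact S.D_sub h (S.f_mem h (S.mul_e_mem _ _))
          _ = S.act.f (τ b) (v * S.e (𝟙 x)) := by rw [hw]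
          _ = S.act.f (τ b) (v * S.e (Groupoid.inv (τ b))) := by rw [S.e_inv_tau]
          _ = v * S.e (τ b) := hv x b (τ b)
          _ = v * S.e (𝟙 b) := by rw [S.e_tau]
      calc (∑ b : G, ∑ g : x ⟶ b, S.act.f g (w * S.e (Groupoid.inv g)))
          = ∑ b : G, v * S.e (𝟙 b) := Finset.sum_congr rfl fun b _ => hinner b
        _ = v := by rw [← Finset.mul_sum, S.sum_id_one, mul_one]
    · -- a ≠ x : everything vanishes
      refine Finset.sum_eq_zero fun b _ => Finset.sum_eq_zero fun g _ => ?_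
      have hx0 : S.e (𝟙 x) * S.e (Groupoid.inv g) = 0 := by
        calc S.e (𝟙 x) * S.e (Groupoid.inv g)
            = S.e (𝟙 x) * (S.e (Groupoid.inv g) * S.e (𝟙 a)) := by rw [S.e_mul_id]
          _ = S.e (Groupoid.inv g) * S.e (𝟙 a) * S.e (𝟙 x) := by rw [S.e_central]
          _ = S.e (Groupoid.inv g) * (S.e (𝟙 a) * S.e (𝟙 x)) := mul_assoc _ _ _
          _ = 0 := by rw [S.orth a x ha, mul_zero]
      have hz : w * S.e (Groupoid.inv g) = 0 := by
        rw [← hwx, mul_assoc, hx0, mul_zero]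
      rw [hz, S.f_zero]
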